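/- For every d ∈ ℕ there exist positive integers ℓ and m and a natural number t_0 such that the following holds for every polynomial h ∈ ℂ[X] of degree at most d and every integer t ≥ t_0: setting s = ⌊t/ℓ⌋, there exists w_0 ∈ {s, 2s, …, (ℓ−1)s} such that |h(w)| ≤ m · |h(w_0)| for every integer w with 0 ≤ w ≤ t. -/

import Mathlib

open Polynomial Finset

lemma abs_nat_sub_le {a b M : ℕ} (ha : a ≤ M) (hb : b ≤ M) :
    ‖(a : ℂ) - (b : ℂ)‖ ≤ (M : ℝ) := by
  rw [show ((a : ℂ) - b) = (((a : ℝ) - b : ℝ) : ℂ) by push_cast; ring, Complex.norm_real, Real.norm_eq_abs,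
    abs_sub_le_iff]
  constructor <;> [skip; skip] <;>
    · have h1 : (a : ℝ) ≤ M := by exact_mod_cast ha
      have h2 : (b : ℝ) ≤ M := by exact_mod_cast hb
      have h3 : (0 : ℝ) ≤ a := Nat.cast_nonneg a
      have h4 : (0 : ℝ) ≤ b := Nat.cast_nonneg b
      linarith

lemma sv_le_abs {j k sv : ℕ} (hjk : j ≠ k) :
    (sv : ℝ) ≤ ‖(↑(j * sv) : ℂ) - (↑(k * sv) : ℂ)‖ := by
  rw [show ((↑(j * sv) : ℂ) - ↑(k * sv)) = ((((j : ℝ) - k) * sv : ℝ) : ℂ) by push_cast; ring,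
    Complex.norm_real, Real.norm_eq_abs, abs_mul, abs_of_nonneg (by positivity : (0:ℝ) ≤ (sv:ℝ))]
  have h2 : (1:ℤ) ≤ |(j:ℤ) - k| := by
    rcases hjk.lt_or_gt with hlt | hlt
    · rw [abs_sub_comm, abs_of_nonneg (by omega : (0:ℤ) ≤ (k:ℤ) - j)]; omega
    · rw [abs_of_nonneg (by omega : (0:ℤ) ≤ (j:ℤ) - k)]; omega
  have h1 : (1 : ℝ) ≤ |(j : ℝ) - k| := by exact_mod_cast h2
  calc (sv : ℝ) = 1 * sv := (one_mul _).symm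
    _ ≤ |(j : ℝ) - k| * sv := mul_le_mul_of_nonneg_right h1 (by positivity)

theorem stmt_3 (d : ℕ) :
    ∃ ℓ m t₀ : ℕ, 0 < ℓ ∧ 0 < m ∧
      ∀ h : Polynomial ℂ, h.natDegree ≤ d →
        ∀ t : ℕ, t₀ ≤ t →
          ∃ j : ℕ, 1 ≤ j ∧ j ≤ ℓ - 1 ∧
            ∀ w : ℕ, w ≤ t →
              ‖h.eval (w : ℂ)‖ ≤
                (m : ℝ) * ‖h.eval ((j * (t / ℓ) : ℕ) : ℂ)‖ := by
  refine ⟨d + 2, (d + 1) * (2 * (d + 2)) ^ d, 2 * (d + 2), by omega, by positivity, ?_⟩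
  intro h hd t ht
  set L := d + 2 with hL
  set sv := t / L with hsvdef
  have hLpos : 0 < L := by omega
  have hsv1 : 1 ≤ sv := by
    rw [hsvdef]
    exact (Nat.le_div_iff_mul_le hLpos).mpr (by omega)
  have htle : t ≤ 2 * L * sv := by
    have h1 := Nat.div_add_mod t L
    have h2 := Nat.mod_lt t hLpos
    have h3 : L ≤ L * sv := by
      calc L = L * 1 := (mul_one L).symm
        _ ≤ L * sv := Nat.mul_le_mul_left L hsv1
    calc t = L * sv + t % L := h1.symm
      _ ≤ 2 * L * sv := by rw [show 2 * L * sv = L * sv + L * sv by ring]; omega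
  set S : Finset ℕ := Finset.Icc 1 (d + 1) with hS
  have hcard : S.card = d + 1 := by simp [hS]
  set v : ℕ → ℂ := fun j => ((j * sv : ℕ) : ℂ) with hv
  have hinj : Set.InjOn v S := by
    intro a _ b _ hab
    simp only [hv, Nat.cast_inj] at hab
    exact Nat.eq_of_mul_eq_mul_right hsv1 hab
  have hdeg : h.degree < (S.card : ℕ) := by
    rw [hcard]
    calc h.degree ≤ (h.natDegree : WithBot ℕ) := degree_le_natDegree
      _ < ((d + 1 : ℕ) : WithBot ℕ) := by exact_mod_cast Nat.lt_succ_of_le hd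
  have hSne : S.Nonempty := ⟨1, by simp [hS]⟩
  obtain ⟨j₀, hj₀S, hj₀max⟩ := S.exists_max_image (fun j => ‖h.eval (v j)‖) hSne
  obtain ⟨hj₀1, hj₀2⟩ := Finset.mem_Icc.mp hj₀S
  refine ⟨j₀, hj₀1, by omega, ?_⟩
  intro w hw
  -- basis bound
  have hbasis : ∀ j ∈ S, ‖(Lagrange.basis S v j).eval (w : ℂ)‖ ≤ (2 * L : ℝ) ^ d := by
    intro j hjS
    rw [Lagrange.basis, eval_prod, norm_prod]
    have hstep : ∀ k ∈ S.erase j,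
        ‖(Lagrange.basisDivisor (v j) (v k)).eval (w : ℂ)‖ ≤ (2 * L : ℝ) := by
      intro k hk
      obtain ⟨hkj, hkS⟩ := Finset.mem_erase.mp hk
      obtain ⟨hk1, hk2⟩ := Finset.mem_Icc.mp hkS
      obtain ⟨hj1, hj2⟩ := Finset.mem_Icc.mp hjS
      have heval : (Lagrange.basisDivisor (v j) (v k)).eval (w : ℂ)
          = (v j - v k)⁻¹ * ((w : ℂ) - v k) := by
        simp [Lagrange.basisDivisor, eval_mul, eval_C, eval_sub, eval_X]
      rw [heval, norm_mul, norm_inv]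
      have hlow : (sv : ℝ) ≤ ‖v j - v k‖ := sv_le_abs (fun e => hkj e.symm)
      have hup : ‖(w : ℂ) - v k‖ ≤ ((2 * L * sv : ℕ) : ℝ) := by
        refine abs_nat_sub_le (le_trans hw htle) ?_
        calc k * sv ≤ (d + 1) * sv := Nat.mul_le_mul_right sv hk2
          _ ≤ 2 * L * sv := Nat.mul_le_mul_right sv (by omega)
      have hsvpos : (0 : ℝ) < (sv : ℝ) := by exact_mod_cast hsv1
      have habs_pos : (0 : ℝ) < ‖v j - v k‖ := lt_of_lt_of_le hsvpos hlow
      calc (‖v j - v k‖)⁻¹ * ‖(w : ℂ) - v k‖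
          ≤ (sv : ℝ)⁻¹ * ((2 * L * sv : ℕ) : ℝ) := by
            apply mul_le_mul (inv_anti₀ hsvpos hlow) hup (by positivity) (by positivity)
        _ = (2 * L : ℝ) := by
            push_cast
            field_simp
    calc (∏ k ∈ S.erase j, ‖(Lagrange.basisDivisor (v j) (v k)).eval (w : ℂ)‖)
        ≤ ∏ _k ∈ S.erase j, (2 * L : ℝ) :=
          Finset.prod_le_prod (fun k _ => by positivity) hstep
      _ = (2 * L : ℝ) ^ (S.erase j).card := by rw [Finset.prod_const]
      _ = (2 * L : ℝ) ^ d := by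
          rw [Finset.card_erase_of_mem hjS, hcard]
          norm_num
  -- interpolation identity
  have hinterp : h.eval (w : ℂ)
      = ∑ j ∈ S, h.eval (v j) * (Lagrange.basis S v j).eval (w : ℂ) := by
    conv_lhs => rw [Lagrange.eq_interpolate hinj hdeg]
    rw [Lagrange.interpolate_apply, eval_finset_sum]
    exact Finset.sum_congr rfl (fun j _ => by rw [eval_mul, eval_C])
  rw [hinterp]
  have hvj₀ : v j₀ = ((j₀ * (t / L) : ℕ) : ℂ) := by rw [hv]
  calc ‖∑ j ∈ S, h.eval (v j) * (Lagrange.basis S v j).eval (w : ℂ)‖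
      ≤ ∑ j ∈ S, ‖h.eval (v j) * (Lagrange.basis S v j).eval (w : ℂ)‖ :=
        norm_sum_le _ _
    _ ≤ ∑ j ∈ S, ‖h.eval (v j₀)‖ * (2 * L : ℝ) ^ d := by
        refine Finset.sum_le_sum (fun j hj => ?_)
        rw [norm_mul]
        exact mul_le_mul (hj₀max j hj) (hbasis j hj) (by positivity) (by positivity)
    _ = (d + 1 : ℝ) * (2 * L : ℝ) ^ d * ‖h.eval (v j₀)‖ := by
        rw [Finset.sum_const, hcard, nsmul_eq_mul]
        push_cast
        ring
    _ = ((d + 1) * (2 * (d + 2)) ^ d : ℕ) * ‖h.eval ((j₀ * (t / (d + 2)) : ℕ) : ℂ)‖ := by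
        rw [← hvj₀]
        push_cast [hL]
        ring
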